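/- arXiv:1803.10448 — 2 statements merged into one kernel-verified Lean document; each statement's English description precedes it below -/
import Mathlib

section
/- Let X ⊆ ℝⁿ be a nonempty closed convex set, x ∈ X, and v ∈ ℝⁿ. Then the directional projection Π_X(x,v) := lim_{ε→0⁺} (proj_X(x+εv) − x)/ε equals the projection of v onto the tangent cone of X at x. -/
open scoped RealInnerProductSpace

/-- `p` is a metric projection of `v` onto `S`. -/
def IsProjOn {n : ℕ} (S : Set (EuclideanSpace ℝ (Fin n)))
    (v p : EuclideanSpace ℝ (Fin n)) : Prop :=
  p ∈ S ∧ ∀ y ∈ S, ‖v - p‖ ≤ ‖v - y‖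

/-- Normal cone of `X` at `x`. -/
def NCone {n : ℕ} (X : Set (EuclideanSpace ℝ (Fin n))) (x : EuclideanSpace ℝ (Fin n)) :
    Set (EuclideanSpace ℝ (Fin n)) :=
  {w | ∀ z ∈ X, ⟪w, z - x⟫ ≤ 0}

/-- Tangent cone of `X` at `x`, defined as the polar of the normal cone. -/
def TCone {n : ℕ} (X : Set (EuclideanSpace ℝ (Fin n))) (x : EuclideanSpace ℝ (Fin n)) :
    Set (EuclideanSpace ℝ (Fin n)) :=
  {v | ∀ w ∈ NCone X x, ⟪w, v⟫ ≤ 0}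

lemma isProjOn_inner {n : ℕ} {S : Set (EuclideanSpace ℝ (Fin n))} (hS : Convex ℝ S)
    {v p : EuclideanSpace ℝ (Fin n)} (h : IsProjOn S v p) :
    ∀ y ∈ S, ⟪v - p, y - p⟫ ≤ 0 := by
  have hinf : ‖v - p‖ = ⨅ w : S, ‖v - w‖ := by
    haveI : Nonempty S := ⟨⟨p, h.1⟩⟩
    have hbdd : BddBelow (Set.range fun w : S => ‖v - w‖) := by
      refine ⟨0, ?_⟩
      rintro _ ⟨w, rfl⟩
      positivity
    refine le_antisymm (le_ciInf fun w => h.2 w w.2) (ciInf_le hbdd ⟨p, h.1⟩)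
  exact (norm_eq_iInf_iff_real_inner_le_zero hS h.1).1 hinf

lemma tcone_convex {n : ℕ} (X : Set (EuclideanSpace ℝ (Fin n))) (x : EuclideanSpace ℝ (Fin n)) :
    Convex ℝ (TCone X x) := by
  intro v1 h1 v2 h2 a b ha hb hab w hw
  have e1 := h1 w hw
  have e2 := h2 w hw
  rw [inner_add_right, real_inner_smul_right, real_inner_smul_right]
  nlinarith [mul_le_mul_of_nonneg_left e1 ha, mul_le_mul_of_nonneg_left e2 hb]

lemma tcone_smul {n : ℕ} {X : Set (EuclideanSpace ℝ (Fin n))} {x : EuclideanSpace ℝ (Fin n)}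
    {c : ℝ} (hc : 0 ≤ c) {u : EuclideanSpace ℝ (Fin n)} (hu : u ∈ TCone X x) :
    c • u ∈ TCone X x := by
  intro w hw
  rw [real_inner_smul_right]
  exact mul_nonpos_of_nonneg_of_nonpos hc (hu w hw)

lemma tcone_mem_closure {n : ℕ} {X : Set (EuclideanSpace ℝ (Fin n))} (hconv : Convex ℝ X)
    {x : EuclideanSpace ℝ (Fin n)} (hx : x ∈ X) {p : EuclideanSpace ℝ (Fin n)}
    (hp : p ∈ TCone X x) :
    p ∈ closure {u : EuclideanSpace ℝ (Fin n) | ∃ c : ℝ, 0 < c ∧ ∃ z ∈ X, u = c • (z - x)} := by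
  have hS : Convex ℝ ((fun z : EuclideanSpace ℝ (Fin n) => z - x) '' X) := by
    rintro _ ⟨z1, hz1, rfl⟩ _ ⟨z2, hz2, rfl⟩ a b ha hb hab
    refine ⟨a • z1 + b • z2, hconv hz1 hz2 ha hb hab, ?_⟩
    have hxx : a • x + b • x = x := by rw [← add_smul, hab, one_smul]
    rw [smul_sub, smul_sub]
    conv_lhs => rw [← hxx]
    abel
  set C0 : ConvexCone ℝ (EuclideanSpace ℝ (Fin n)) := hS.toCone _ with hC0
  have hC0mem : ∀ u : EuclideanSpace ℝ (Fin n),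
      u ∈ C0 ↔ ∃ c : ℝ, 0 < c ∧ ∃ z ∈ X, u = c • (z - x) := by
    intro u
    rw [hC0, Convex.mem_toCone]
    constructor
    · rintro ⟨c, hc, _, ⟨z, hz, rfl⟩, rfl⟩
      exact ⟨c, hc, z, hz, rfl⟩
    · rintro ⟨c, hc, z, hz, rfl⟩
      exact ⟨c, hc, z - x, ⟨z, hz, rfl⟩, rfl⟩
  set C : ConvexCone ℝ (EuclideanSpace ℝ (Fin n)) := C0.closure with hC
  have hsub : ∀ z ∈ X, z - x ∈ (C : Set (EuclideanSpace ℝ (Fin n))) := by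
    intro z hz
    refine subset_closure ?_
    exact (hC0mem _).2 ⟨1, one_pos, z, hz, (one_smul ℝ _).symm⟩
  have hne : (C : Set (EuclideanSpace ℝ (Fin n))).Nonempty := ⟨x - x, hsub x hx⟩
  have hcl : IsClosed (C : Set (EuclideanSpace ℝ (Fin n))) := by
    rw [hC, ConvexCone.coe_closure]; exact isClosed_closure
  have hbi : ∀ p' : EuclideanSpace ℝ (Fin n),
      (∀ y, (∀ w ∈ (C : Set (EuclideanSpace ℝ (Fin n))), 0 ≤ ⟪w, y⟫) → 0 ≤ ⟪y, p'⟫) → p' ∈ C := by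
    intro p' hp'
    let K : ProperCone ℝ (EuclideanSpace ℝ (Fin n)) :=
      { toSubmodule := C.toPointedCone (ConvexCone.Pointed.of_nonempty_of_isClosed hne hcl)
        isClosed' := hcl }
    by_contra hpn
    have hK : p' ∉ K := hpn
    obtain ⟨y, hy1, hy2⟩ := K.hyperplane_separation' hK
    have := hp' y hy1
    rw [real_inner_comm] at this
    linarith
  have hpC : p ∈ C := by
    apply hbi
    intro y hy
    have hyN : -y ∈ NCone X x := by
      intro z hz
      have := hy (z - x) (hsub z hz)
      rw [inner_neg_left, real_inner_comm]
      linarith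
    have := hp (-y) hyN
    rw [inner_neg_left] at this
    linarith
  have heq : {u : EuclideanSpace ℝ (Fin n) | ∃ c : ℝ, 0 < c ∧ ∃ z ∈ X, u = c • (z - x)}
      = (C0 : Set (EuclideanSpace ℝ (Fin n))) := by
    ext u; exact ((hC0mem u).symm)
  rw [heq]
  exact hpC


set_option maxHeartbeats 1000000 in
/-- The directional projection `Π_X(x,v) = lim_{ε→0⁺} (proj_X(x+εv) − x)/ε` equals the
projection of `v` onto the tangent cone of `X` at `x`. -/
theorem stmt1 {n : ℕ} (X : Set (EuclideanSpace ℝ (Fin n)))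
    (hne : X.Nonempty) (hcl : IsClosed X) (hconv : Convex ℝ X)
    (x : EuclideanSpace ℝ (Fin n)) (hx : x ∈ X) (v : EuclideanSpace ℝ (Fin n))
    (P : EuclideanSpace ℝ (Fin n) → EuclideanSpace ℝ (Fin n))
    (hP : ∀ u, IsProjOn X u (P u))
    (pT : EuclideanSpace ℝ (Fin n)) (hpT : IsProjOn (TCone X x) v pT) :
    Filter.Tendsto (fun ε : ℝ => ε⁻¹ • (P (x + ε • v) - x))
      (nhdsWithin 0 (Set.Ioi 0)) (nhds pT) := by
  -- properties of pT
  have hpTT : pT ∈ TCone X x := hpT.1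
  have hVI := isProjOn_inner (tcone_convex X x) hpT
  have horth : ⟪v - pT, pT⟫ = 0 := by
    have h2T : (2 : ℝ) • pT ∈ TCone X x := tcone_smul (by norm_num) hpTT
    have h0T : (0 : ℝ) • pT ∈ TCone X x := tcone_smul le_rfl hpTT
    have e1 := hVI _ h2T
    have e2 := hVI _ h0T
    rw [zero_smul] at e2
    have e1' : ((2 : ℝ) • pT : EuclideanSpace ℝ (Fin n)) - pT = pT := by
      rw [two_smul]; abel
    rw [e1'] at e1
    rw [zero_sub, inner_neg_right] at e2
    linarith
  have hpolar : ∀ u ∈ TCone X x, ⟪v - pT, u⟫ ≤ 0 := by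
    intro u hu
    have := hVI u hu
    rw [inner_sub_right, horth] at this
    linarith
  -- the limit
  rw [Metric.tendsto_nhdsWithin_nhds]
  intro η hη
  -- choose an approximation of pT from the cone generated by X - x
  set δ : ℝ := η ^ 2 / (4 * (‖v‖ + 1)) with hδdef
  have hδ : 0 < δ := by positivity
  have hdens := tcone_mem_closure hconv hx hpTT
  obtain ⟨u, hu, hdu⟩ := Metric.mem_closure_iff.mp hdens δ hδ
  obtain ⟨c, hc, z, hz, rfl⟩ := hu
  rw [dist_eq_norm] at hdu
  -- choose ε₀
  refine ⟨η ^ 2 / 2 / (c * ‖v‖ ^ 2 + 1), by positivity, ?_⟩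
  intro ε hεI hεd
  have hε : 0 < ε := hεI
  rw [Real.dist_eq, sub_zero, abs_of_pos hε] at hεd
  set pe := P (x + ε • v) with hpe
  set q : EuclideanSpace ℝ (Fin n) := ε⁻¹ • (pe - x) with hqdef
  have hpeX : pe ∈ X := (hP _).1
  have hq : ε • q = pe - x := smul_inv_smul₀ hε.ne' _
  have hVX := isProjOn_inner hconv (hP (x + ε • v))
  have hkey : x + ε • v - pe = ε • (v - q) := by rw [smul_sub, hq]; abel
  have hz' : ∀ w : EuclideanSpace ℝ (Fin n), w - pe = (w - x) - ε • q := by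
    intro w; rw [hq]; abel
  have h3 : ∀ w ∈ X, ⟪v - q, w - x⟫ ≤ ε * ⟪v - q, q⟫ := by
    intro w hw
    have := hVX w hw
    rw [hkey, hz' w, real_inner_smul_left, inner_sub_right, real_inner_smul_right] at this
    by_contra hcon
    push_neg at hcon
    nlinarith
  have ha : 0 ≤ ⟪v - q, q⟫ := by
    have := h3 x hx
    rw [sub_self, inner_zero_right] at this
    by_contra hcon
    push_neg at hcon
    nlinarith
  have hqnorm : ‖q‖ ≤ ‖v‖ := by
    have haexp : ⟪v - q, q⟫ = ⟪v, q⟫ - ‖q‖ ^ 2 := by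
      rw [inner_sub_left, real_inner_self_eq_norm_sq]
    have hcs := real_inner_le_norm v q
    nlinarith [norm_nonneg q, norm_nonneg v]
  have ha_ub : ⟪v - q, q⟫ ≤ ‖v‖ ^ 2 := by
    have haexp : ⟪v - q, q⟫ = ⟪v, q⟫ - ‖q‖ ^ 2 := by
      rw [inner_sub_left, real_inner_self_eq_norm_sq]
    have hcs := real_inner_le_norm v q
    nlinarith [norm_nonneg q, norm_nonneg v]
  have hvq : ‖v - q‖ ≤ 2 * ‖v‖ := by
    have := norm_sub_le v q
    linarith
  -- q belongs to the tangent cone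
  have hqT : q ∈ TCone X x := by
    intro w hw
    rw [hqdef, real_inner_smul_right]
    exact mul_nonpos_of_nonneg_of_nonpos (by positivity) (hw pe hpeX)
  have h4 : ⟪v - pT, q⟫ ≤ 0 := hpolar q hqT
  -- main estimate
  have expand : ‖q - pT‖ ^ 2 = ⟪q - pT, q - v⟫ + ⟪q - pT, v - pT⟫ := by
    calc ‖q - pT‖ ^ 2 = ⟪q - pT, q - pT⟫ := (real_inner_self_eq_norm_sq _).symm
    _ = ⟪q - pT, (q - v) + (v - pT)⟫ := by rw [show (q - v) + (v - pT) = q - pT by abel]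
    _ = ⟪q - pT, q - v⟫ + ⟪q - pT, v - pT⟫ := inner_add_right _ _ _
  have term2 : ⟪q - pT, v - pT⟫ ≤ 0 := by
    have hc1 : ⟪pT, v - pT⟫ = (0 : ℝ) := by rw [real_inner_comm]; exact horth
    have hc2 : ⟪q, v - pT⟫ ≤ (0 : ℝ) := by rw [real_inner_comm]; exact h4
    rw [inner_sub_left]
    linarith
  have e1 : ⟪q - pT, q - v⟫ = -⟪v - q, q⟫ + ⟪v - q, pT⟫ := by
    simp only [inner_sub_left, inner_sub_right]
    rw [real_inner_comm q v, real_inner_comm pT q, real_inner_comm pT v]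
    ring
  have hsplit : ⟪v - q, pT⟫ = ⟪v - q, c • (z - x)⟫ + ⟪v - q, pT - c • (z - x)⟫ := by
    rw [← inner_add_right]
    congr 1
    abel
  have hb1 : ⟪v - q, c • (z - x)⟫ ≤ c * (ε * ⟪v - q, q⟫) := by
    rw [real_inner_smul_right]
    exact mul_le_mul_of_nonneg_left (h3 z hz) hc.le
  have hb2 : ⟪v - q, pT - c • (z - x)⟫ ≤ 2 * ‖v‖ * δ := by
    calc ⟪v - q, pT - c • (z - x)⟫ ≤ ‖v - q‖ * ‖pT - c • (z - x)‖ := real_inner_le_norm _ _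
    _ ≤ 2 * ‖v‖ * δ := by
        apply mul_le_mul hvq hdu.le (norm_nonneg _) (by positivity)
  -- combine
  have hsq : ‖q - pT‖ ^ 2 < η ^ 2 := by
    have hfirst : c * ε * ‖v‖ ^ 2 < η ^ 2 / 2 := by
      have hpos : (0 : ℝ) < c * ‖v‖ ^ 2 + 1 := by positivity
      have := (lt_div_iff₀ hpos).mp hεd
      nlinarith [hε]
    have hsecond : 2 * ‖v‖ * δ < η ^ 2 / 2 := by
      have hδeq : δ * (‖v‖ + 1) = η ^ 2 / 4 := by
        rw [hδdef]; field_simp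
      nlinarith [hδ]
    have hmid : ⟪q - pT, q - v⟫ ≤ c * ε * ‖v‖ ^ 2 + 2 * ‖v‖ * δ := by
      rw [e1, hsplit]
      have hcεa : c * (ε * ⟪v - q, q⟫) ≤ c * ε * ‖v‖ ^ 2 := by
        have := mul_le_mul_of_nonneg_left ha_ub (mul_nonneg hc.le hε.le)
        nlinarith
      linarith
    calc ‖q - pT‖ ^ 2 = ⟪q - pT, q - v⟫ + ⟪q - pT, v - pT⟫ := expand
    _ ≤ c * ε * ‖v‖ ^ 2 + 2 * ‖v‖ * δ := by linarith
    _ < η ^ 2 := by linarith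
  rw [dist_eq_norm]
  exact lt_of_pow_lt_pow_left₀ 2 hη.le hsq
end

section
/- Let f¹,…,fᴺ: ℝⁿ → ℝ be differentiable with ℓ-strongly monotone gradients on convex sets Xⁱ (i.e., (x−y)·(∇fⁱ(x)−∇fⁱ(y)) ≥ ℓ‖x−y‖² for x,y ∈ Xⁱ), and let C ∈ ℝ^{n×n}. Define F(x) := (∇f¹(x¹)+C·avg(x), …, ∇fᴺ(xᴺ)+C·avg(x)) on ∏ᵢXⁱ, where avg(x) = (1/N)∑ⱼxʲ. If ℓ + (1/2)λ_min(C + Cᵀ) > 0, then F is strictly monotone on ∏ᵢXⁱ: (x − y)·(F(x) − F(y)) > 0 whenever x ≠ y. -/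
open scoped RealInnerProductSpace

/-- Average of the collective strategy vector. -/
noncomputable def avg {n N : ℕ} (x : Fin N → EuclideanSpace ℝ (Fin n)) :
    EuclideanSpace ℝ (Fin n) :=
  (N : ℝ)⁻¹ • ∑ j, x j

/-- If the gradients `∇fⁱ` are `ℓ`-strongly monotone on `Xⁱ` and
`ℓ + (1/2)λ_min(C + Cᵀ) > 0`, then the pseudo-gradient mapping
`F(x) = (∇fⁱ(xⁱ) + C·avg(x))ᵢ` is strictly monotone on `∏ᵢXⁱ`. -/
theorem stmt12 {n N : ℕ}
    (X : Fin N → Set (EuclideanSpace ℝ (Fin n))) (hcv : ∀ i, Convex ℝ (X i))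
    (f : Fin N → EuclideanSpace ℝ (Fin n) → ℝ) (hfdiff : ∀ i, Differentiable ℝ (f i))
    (ℓ : ℝ) (hℓ : 0 < ℓ)
    (hmono : ∀ i, ∀ x ∈ X i, ∀ y ∈ X i,
      ℓ * ‖x - y‖ ^ 2 ≤ ⟪x - y, gradient (f i) x - gradient (f i) y⟫)
    (C : EuclideanSpace ℝ (Fin n) →L[ℝ] EuclideanSpace ℝ (Fin n))
    (lam : ℝ)
    (hlam : ∀ w : EuclideanSpace ℝ (Fin n), lam * ‖w‖ ^ 2 ≤ 2 * ⟪C w, w⟫)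
    (hcond : 0 < ℓ + (1 / 2) * lam)
    (F : (Fin N → EuclideanSpace ℝ (Fin n)) → Fin N → EuclideanSpace ℝ (Fin n))
    (hF : ∀ x i, F x i = gradient (f i) (x i) + C (avg x)) :
    ∀ x y : Fin N → EuclideanSpace ℝ (Fin n),
      (∀ i, x i ∈ X i) → (∀ i, y i ∈ X i) → x ≠ y →
        0 < ∑ i, ⟪x i - y i, F x i - F y i⟫ := by
  intro x y hx hy hxy
  rcases Nat.eq_zero_or_pos N with hN | hN
  · subst hN
    exact absurd (funext fun i => i.elim0) hxy
  have hNpos : (0:ℝ) < N := by exact_mod_cast hN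
  set w : EuclideanSpace ℝ (Fin n) := avg x - avg y with hw
  have hsum_d : ∑ i, (x i - y i) = (N:ℝ) • w := by
    simp only [hw, avg, smul_sub, smul_smul, mul_inv_cancel₀ (ne_of_gt hNpos), one_smul,
      Finset.sum_sub_distrib]
  -- rewrite sum
  have hsplit : ∑ i, ⟪x i - y i, F x i - F y i⟫
      = (∑ i, ⟪x i - y i, gradient (f i) (x i) - gradient (f i) (y i)⟫)
        + (N:ℝ) * ⟪C w, w⟫ := by
    have : ∀ i, F x i - F y i
        = (gradient (f i) (x i) - gradient (f i) (y i)) + C w := by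
      intro i
      rw [hF, hF, hw, map_sub]
      abel
    simp only [this, inner_add_right, Finset.sum_add_distrib]
    rw [← sum_inner, hsum_d, real_inner_smul_left, real_inner_comm]
  rw [hsplit]
  set S : ℝ := ∑ i, ‖x i - y i‖ ^ 2 with hS
  have hS_pos : 0 < S := by
    obtain ⟨i, hi⟩ : ∃ i, x i ≠ y i := by
      by_contra h; push_neg at h; exact hxy (funext h)
    refine Finset.sum_pos' (fun j _ => by positivity) ⟨i, Finset.mem_univ i, ?_⟩
    have : x i - y i ≠ 0 := sub_ne_zero.mpr hi
    exact pow_pos (norm_pos_iff.mpr this) 2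
  have h1 : ℓ * S ≤ ∑ i, ⟪x i - y i, gradient (f i) (x i) - gradient (f i) (y i)⟫ := by
    rw [hS, Finset.mul_sum]
    exact Finset.sum_le_sum fun i _ => hmono i (x i) (hx i) (y i) (hy i)
  have hNw : (N:ℝ) * ‖w‖ ^ 2 ≤ S := by
    have h2 : ‖(N:ℝ) • w‖ ≤ ∑ i, ‖x i - y i‖ := by
      rw [← hsum_d]; exact norm_sum_le _ _
    have h3 : (∑ i, ‖x i - y i‖) ^ 2 ≤ (N:ℝ) * S := by
      have := sq_sum_le_card_mul_sum_sq (s := (Finset.univ : Finset (Fin N)))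
        (f := fun i => ‖x i - y i‖)
      simpa [hS] using this
    have h4 : ((N:ℝ) * ‖w‖) ^ 2 ≤ (N:ℝ) * S := by
      calc ((N:ℝ) * ‖w‖) ^ 2 = ‖(N:ℝ) • w‖ ^ 2 := by
            rw [norm_smul]; simp [abs_of_pos hNpos]
        _ ≤ (∑ i, ‖x i - y i‖) ^ 2 := by
            apply pow_le_pow_left₀ (norm_nonneg _) h2
        _ ≤ (N:ℝ) * S := h3
    nlinarith [norm_nonneg w]
  have hCw : lam / 2 * ‖w‖ ^ 2 ≤ ⟪C w, w⟫ := by linarith [hlam w]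
  rcases le_or_gt 0 lam with hl | hl
  · have : 0 ≤ (N:ℝ) * ⟪C w, w⟫ := by
      have : (0:ℝ) ≤ ⟪C w, w⟫ := le_trans (by positivity) hCw
      positivity
    nlinarith
  · have : (lam / 2) * S ≤ (N:ℝ) * ⟪C w, w⟫ := by
      have h5 : (lam/2) * ((N:ℝ) * ‖w‖^2) ≤ (N:ℝ) * ⟪C w, w⟫ := by
        have := mul_le_mul_of_nonneg_left hCw (le_of_lt hNpos)
        nlinarith
      nlinarith [mul_le_mul_of_nonpos_left hNw (by linarith : lam/2 ≤ 0)]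
    nlinarith
end
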